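/- For each t ∈ [0,T], the identity Q_{T-t} = Q_T^{1/2} (I − V_t V_t^*) Q_T^{1/2} holds, where V_t = Q_T^{-1/2} S_{T-t} Q_t^{1/2}. -/
import Mathlib


open ContinuousLinearMap
open scoped RealInnerProductSpace

/-- For `t ∈ [0,T]`, `Q_{T-t} = Q_T^{1/2} (I − V_t V_t^*) Q_T^{1/2}`,
where `V_t = Q_T^{-1/2} S_{T-t} Q_t^{1/2}` (i.e. `Q_T^{1/2} V_t = S_{T-t} Q_t^{1/2}`). -/
theorem QTmt_eq_QThalf_one_sub_VtVtstar_QThalf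
    {H : Type*} [NormedAddCommGroup H] [InnerProductSpace ℝ H] [CompleteSpace H]
    {t T : ℝ} (ht : 0 ≤ t) (htT : t ≤ T)
    (S : ℝ → H →L[ℝ] H)
    (Qt QTmt QT Qthalf QThalf Vt : H →L[ℝ] H)
    (hQthalf_sa : IsSelfAdjoint Qthalf) (hQThalf_sa : IsSelfAdjoint QThalf)
    (hQthalf_sq : Qthalf.comp Qthalf = Qt) (hQThalf_sq : QThalf.comp QThalf = QT)
    (hVt : QThalf.comp Vt = (S (T - t)).comp Qthalf)
    (hid : QT = QTmt + (S (T - t)).comp (Qt.comp (ContinuousLinearMap.adjoint (S (T - t)))))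
    (hQT_inj : Function.Injective QThalf) :
    QTmt = QThalf.comp
      (((1 : H →L[ℝ] H) - Vt.comp (ContinuousLinearMap.adjoint Vt)).comp QThalf) := by
  have hadj : (ContinuousLinearMap.adjoint Vt).comp QThalf
      = Qthalf.comp (ContinuousLinearMap.adjoint (S (T - t))) := by
    have := congrArg ContinuousLinearMap.adjoint hVt
    rwa [adjoint_comp, adjoint_comp, hQThalf_sa.adjoint_eq, hQthalf_sa.adjoint_eq] at this
  have key : QThalf.comp ((Vt.comp (ContinuousLinearMap.adjoint Vt)).comp QThalf)
      = (S (T - t)).comp (Qt.comp (ContinuousLinearMap.adjoint (S (T - t)))) := by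
    calc QThalf.comp ((Vt.comp (ContinuousLinearMap.adjoint Vt)).comp QThalf)
        = (QThalf.comp Vt).comp ((ContinuousLinearMap.adjoint Vt).comp QThalf) := by
          simp [comp_assoc]
      _ = ((S (T - t)).comp Qthalf).comp
            (Qthalf.comp (ContinuousLinearMap.adjoint (S (T - t)))) := by rw [hVt, hadj]
      _ = (S (T - t)).comp (Qt.comp (ContinuousLinearMap.adjoint (S (T - t)))) := by
          rw [← hQthalf_sq]; simp [comp_assoc]
  have : QThalf.comp (((1 : H →L[ℝ] H) - Vt.comp (ContinuousLinearMap.adjoint Vt)).comp QThalf)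
      = QT - (S (T - t)).comp (Qt.comp (ContinuousLinearMap.adjoint (S (T - t)))) := by
    rw [sub_comp, comp_sub, key, one_def, id_comp, hQThalf_sq]
  rw [this, hid]; abel
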